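/- Let L be a finite lattice, a₁, a₂ ∈ L with a₁ incomparable to a₂, a₁ ∧ a₂ = 0 and a₁ ∨ a₂ = 1, and each the pseudocomplement of the other. Let X ⊆ L contain {0,1} ∪ Atoms(L) with max(X \ {1}) = {a₁, a₂}, and suppose X ∩ ↓a_i is a maximal CD-independent subset of ↓a_i for i = 1, 2. Then X is a maximal CD-independent subset of L. -/

import Mathlib

open scoped Classical

/-- A subset `X` of a lattice with `⊥` is CD-independent if any two
incomparable members meet to `⊥`. -/
def CDIndep {L : Type*} [Lattice L] [OrderBot L] (X : Set L) : Prop :=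
  ∀ x ∈ X, ∀ y ∈ X, ¬ x ≤ y → ¬ y ≤ x → x ⊓ y = ⊥

/-- `X` is a maximal CD-independent subset of `S` (within the ambient lattice). -/
def MaxCDIndepIn {L : Type*} [Lattice L] [OrderBot L] (S X : Set L) : Prop :=
  X ⊆ S ∧ CDIndep X ∧ ∀ Y ⊆ S, CDIndep Y → X ⊆ Y → Y = X

/-- `X` is a maximal CD-independent subset of the whole lattice. -/
def MaxCDIndep {L : Type*} [Lattice L] [OrderBot L] (X : Set L) : Prop :=
  MaxCDIndepIn Set.univ X

/-- The length of the subposet `S`: the size of a longest chain contained in `S`, minus 1. -/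
noncomputable def chainLen {L : Type*} [Lattice L] [Fintype L] (S : Set L) : ℕ :=
  ((Finset.univ.powerset.filter
      fun C : Finset L => ↑C ⊆ S ∧ IsChain (· ≤ ·) (C : Set L)).sup Finset.card) - 1

/-- The length of the finite lattice `L`. -/
noncomputable def latLen (L : Type*) [Lattice L] [Fintype L] : ℕ :=
  chainLen (Set.univ : Set L)

/-- `u_*`: the meet of all lower covers of `u`. -/
noncomputable def lowstar {L : Type*} [Lattice L] [Fintype L] [BoundedOrder L] (u : L) : L :=
  (Finset.univ.filter fun v => v ⋖ u).inf id

/-- `L` is meet-distributive if every interval `[u_*, u]` (for `u ≠ ⊥`) is distributive. -/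
def MeetDistrib (L : Type*) [Lattice L] [Fintype L] [BoundedOrder L] : Prop :=
  ∀ u : L, u ≠ ⊥ → ∀ x ∈ Set.Icc (lowstar u) u, ∀ y ∈ Set.Icc (lowstar u) u,
    ∀ z ∈ Set.Icc (lowstar u) u, x ⊓ (y ⊔ z) = (x ⊓ y) ⊔ (x ⊓ z)

/-- Lower semimodularity: `a ⋖ a ⊔ b` implies `a ⊓ b ⋖ b`. -/
def LowerSemimodular (L : Type*) [Lattice L] : Prop :=
  ∀ a b : L, a ⋖ a ⊔ b → a ⊓ b ⋖ b

/-- The number of atoms of `L`. -/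
noncomputable def atomsCard (L : Type*) [Lattice L] [OrderBot L] : ℕ :=
  {a : L | IsAtom a}.ncard

/-- `b` is the pseudocomplement of `a`: the largest element meeting `a` to `⊥`. -/
def PseudoCompl {L : Type*} [Lattice L] [OrderBot L] (a b : L) : Prop :=
  a ⊓ b = ⊥ ∧ ∀ x, a ⊓ x = ⊥ → x ≤ b

/-- `(a, b)` is a pseudocomplemented pair: each is the pseudocomplement of the other. -/
def PseudoPair {L : Type*} [Lattice L] [OrderBot L] (a b : L) : Prop :=
  PseudoCompl a b ∧ PseudoCompl b a

/-- An element is meet-irreducible if it has exactly one cover. -/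
def MeetIrred {L : Type*} [Lattice L] (a : L) : Prop :=
  ∃! b, a ⋖ b

/-- `L` is dually slim: no three-element antichain of meet-irreducible elements. -/
def DuallySlim (L : Type*) [Lattice L] : Prop :=
  ¬ ∃ x y z : L, MeetIrred x ∧ MeetIrred y ∧ MeetIrred z ∧
    ¬ x ≤ y ∧ ¬ y ≤ x ∧ ¬ x ≤ z ∧ ¬ z ≤ x ∧ ¬ y ≤ z ∧ ¬ z ≤ y

theorem recursive_maximal_CDIndep {L : Type*} [Lattice L] [Fintype L]
    [BoundedOrder L] (a₁ a₂ : L)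
    (h12 : ¬ a₁ ≤ a₂) (h21 : ¬ a₂ ≤ a₁)
    (hinf : a₁ ⊓ a₂ = ⊥) (hsup : a₁ ⊔ a₂ = ⊤) (hp : PseudoPair a₁ a₂)
    (X : Set L) (hsub : ({⊥, ⊤} ∪ {a : L | IsAtom a}) ⊆ X)
    (hmax : {x | x ∈ X \ {⊤} ∧ ∀ y ∈ X \ {⊤}, x ≤ y → y = x} = {a₁, a₂})
    (h1 : MaxCDIndepIn (Set.Iic a₁) (X ∩ Set.Iic a₁))
    (h2 : MaxCDIndepIn (Set.Iic a₂) (X ∩ Set.Iic a₂)) :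
    MaxCDIndep X := by
  obtain ⟨⟨hpc1, hpc2⟩, ⟨hpc1', hpc2'⟩⟩ := hp
  have ha1 : a₁ ∈ {x | x ∈ X \ {⊤} ∧ ∀ y ∈ X \ {⊤}, x ≤ y → y = x} := by
    rw [hmax]; left; rfl
  have ha2 : a₂ ∈ {x | x ∈ X \ {⊤} ∧ ∀ y ∈ X \ {⊤}, x ≤ y → y = x} := by
    rw [hmax]; right; rfl
  have ha1X : a₁ ∈ X := ha1.1.1
  have ha2X : a₂ ∈ X := ha2.1.1
  have hbelow : ∀ x ∈ X, x ≠ ⊤ → x ≤ a₁ ∨ x ≤ a₂ := by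
    intro x hx hxt
    have hfin : ({y ∈ X | x ≤ y ∧ y ≠ ⊤} : Set L).Finite := Set.toFinite _
    obtain ⟨m, hm, hmaxm⟩ : ∃ m ∈ ({y ∈ X | x ≤ y ∧ y ≠ ⊤} : Set L),
        ∀ a' ∈ ({y ∈ X | x ≤ y ∧ y ≠ ⊤} : Set L), m ≤ a' → m = a' := by
      obtain ⟨m, hm⟩ := Set.Finite.exists_maximal hfin ⟨x, hx, le_refl x, hxt⟩
      exact ⟨m, hm.1, fun a' ha' h => le_antisymm h (hm.2 ha' h)⟩
    have hmem : m ∈ {x | x ∈ X \ {⊤} ∧ ∀ y ∈ X \ {⊤}, x ≤ y → y = x} := by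
      refine ⟨⟨hm.1, hm.2.2⟩, ?_⟩
      intro y hy hmy
      exact (hmaxm y ⟨hy.1, le_trans hm.2.1 hmy, hy.2⟩ hmy).symm
    rw [hmax] at hmem
    rcases hmem with h | h
    · exact Or.inl (h ▸ hm.2.1)
    · exact Or.inr (h ▸ hm.2.1)
  have hCD : CDIndep X := by
    intro x hx y hy hxy hyx
    have hxt : x ≠ ⊤ := by rintro rfl; exact hyx le_top
    have hyt : y ≠ ⊤ := by rintro rfl; exact hxy le_top
    rcases hbelow x hx hxt with hx1 | hx2 <;> rcases hbelow y hy hyt with hy1 | hy2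
    · exact h1.2.1 x ⟨hx, hx1⟩ y ⟨hy, hy1⟩ hxy hyx
    · exact le_antisymm (le_trans (inf_le_inf hx1 hy2) hinf.le) bot_le
    · exact le_antisymm (le_trans (inf_le_inf hx2 hy1)
        (by rw [inf_comm]; exact hinf.le)) bot_le
    · exact h2.2.1 x ⟨hx, hx2⟩ y ⟨hy, hy2⟩ hxy hyx
  refine ⟨Set.subset_univ X, hCD, ?_⟩
  intro Y _ hYCD hXY
  refine Set.Subset.antisymm (fun z hz => ?_) hXY
  by_cases hzt : z = ⊤
  · exact hzt ▸ hsub (Or.inl (Or.inr rfl))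
  have ha1Y : a₁ ∈ Y := hXY ha1X
  have ha2Y : a₂ ∈ Y := hXY ha2X
  have hzbelow : z ≤ a₁ ∨ z ≤ a₂ := by
    by_cases hza1 : z ≤ a₁
    · exact Or.inl hza1
    by_cases ha1z : a₁ ≤ z
    · -- compare with a₂
      by_cases hza2 : z ≤ a₂
      · exact Or.inr hza2
      by_cases ha2z : a₂ ≤ z
      · exact absurd (top_le_iff.mp (hsup ▸ sup_le ha1z ha2z)) hzt
      · have : z ⊓ a₂ = ⊥ := hYCD z hz a₂ ha2Y hza2 ha2z
        exact Or.inl (hpc2' z (by rwa [inf_comm]))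
    · have : z ⊓ a₁ = ⊥ := hYCD z hz a₁ ha1Y hza1 ha1z
      exact Or.inr (hpc2 z (by rwa [inf_comm]))
  have key : ∀ a : L, MaxCDIndepIn (Set.Iic a) (X ∩ Set.Iic a) → z ≤ a → z ∈ X := by
    intro a ha hza
    have hZsub : (X ∩ Set.Iic a) ∪ {z} ⊆ Set.Iic a := by
      rintro w (hw | hw)
      · exact hw.2
      · exact hw ▸ hza
    have hZY : (X ∩ Set.Iic a) ∪ {z} ⊆ Y := by
      rintro w (hw | hw)
      · exact hXY hw.1
      · exact hw ▸ hz
    have hZCD : CDIndep ((X ∩ Set.Iic a) ∪ {z}) :=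
      fun x hx y hy => hYCD x (hZY hx) y (hZY hy)
    have := ha.2.2 _ hZsub hZCD Set.subset_union_left
    have hzmem : z ∈ X ∩ Set.Iic a := this ▸ Set.mem_union_right _ rfl
    exact hzmem.1
  rcases hzbelow with h | h
  · exact key a₁ h1 h
  · exact key a₂ h2 h
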